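/- Let u be a nonempty palindrome and let v be a nonempty prefix of u. For every k ≥ 2, the word (reverse of v) u^{k-1} v is a palindromic suffix of u^k v, and it is the longest palindromic suffix if it is unioccurrent; more generally, u^k v has a unioccurrent longest palindromic suffix, and consequently D(u^{k+1}) = D(u^k) for all k ≥ 2. -/

import Mathlib

open List

variable {A : Type*}

/-- All factors (contiguous subwords) of a word, as a list. -/
def Factors (w : List A) : List (List A) := w.tails.flatMap List.inits

/-- The set of distinct palindromic factors of `w` (including the empty word). -/
def palFactors [DecidableEq A] (w : List A) : Finset (List A) :=
  ((Factors w).filter (fun u => decide (u.reverse = u))).toFinset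

/-- A word is rich if it has exactly `|w| + 1` distinct palindromic factors. -/
def IsRich [DecidableEq A] (w : List A) : Prop :=
  (palFactors w).card = w.length + 1

/-- The defect of a finite word. -/
def defect [DecidableEq A] (w : List A) : ℕ :=
  w.length + 1 - (palFactors w).card

/-- `u` is a (finite) factor of the infinite word `z`. -/
def FactorOfInf (u : List A) (z : ℕ → A) : Prop :=
  ∃ i, u = (List.range u.length).map (fun k => z (i + k))

/-- An infinite word is rich if all of its finite factors are rich. -/
def InfRich [DecidableEq A] (z : ℕ → A) : Prop :=
  ∀ u : List A, FactorOfInf u z → IsRich u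

/-- The longest palindromic suffix of `w`. -/
def lps [DecidableEq A] (w : List A) : List A :=
  (w.tails.find? (fun u => decide (u.reverse = u))).getD []

/-- The number of occurrences of `u` as a factor of `w` (counted by position). -/
def occCount [DecidableEq A] (u w : List A) : ℕ :=
  w.tails.countP (fun t => decide (u <+: t))

/-- The periodic infinite word `u^∞`. -/
def periodicWord (u : List A) (hu : u ≠ []) : ℕ → A :=
  fun i => u.get ⟨i % u.length, Nat.mod_lt _ (List.length_pos_iff.mpr hu)⟩

lemma join_rep_succ (u : List A) (k : ℕ) :
    (List.replicate (k+1) u).flatten = u ++ (List.replicate k u).flatten := by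
  simp [List.replicate_succ]

lemma join_rep_succ' (u : List A) (k : ℕ) :
    (List.replicate (k+1) u).flatten = (List.replicate k u).flatten ++ u := by
  rw [List.replicate_succ']
  simp

lemma length_join_rep (u : List A) (k : ℕ) :
    ((List.replicate k u).flatten).length = k * u.length := by
  induction k with
  | zero => simp
  | succ k ih => rw [join_rep_succ]; simp [ih]; ring

lemma join_rep_comm (u : List A) (k : ℕ) :
    (List.replicate k u).flatten ++ u = u ++ (List.replicate k u).flatten := by
  induction k with
  | zero => simp
  | succ k ih => rw [join_rep_succ]; rw [List.append_assoc, ih]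

lemma join_rep_rev (u : List A) (h : u.reverse = u) (k : ℕ) :
    ((List.replicate k u).flatten).reverse = (List.replicate k u).flatten := by
  induction k with
  | zero => simp
  | succ k ih => rw [join_rep_succ, List.reverse_append, ih, h, join_rep_comm]

lemma join_rep_join (r : List A) (a b : ℕ) :
    (List.replicate a ((List.replicate b r).flatten)).flatten = (List.replicate (a*b) r).flatten := by
  induction a with
  | zero => simp
  | succ a ih =>
      rw [join_rep_succ, ih, Nat.succ_mul, Nat.add_comm, ← List.flatten_append,
        ← List.replicate_add]

lemma take_join_rep (r : List A) (hg : 0 < r.length) :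
    ∀ (N L : ℕ), L ≤ N * r.length →
    ((List.replicate N r).flatten).take L
      = (List.replicate (L / r.length) r).flatten ++ r.take (L % r.length) := by
  intro N
  induction N with
  | zero => intro L hL; simp at hL; simp [hL]
  | succ N ih =>
      intro L hL
      rw [join_rep_succ, List.take_append]
      by_cases h : L ≤ r.length
      · rcases Nat.lt_or_ge L r.length with h' | h'
        · rw [Nat.div_eq_of_lt h', Nat.mod_eq_of_lt h']
          simp [Nat.sub_eq_zero_of_le h]
        · have hLr : L = r.length := le_antisymm h h'
          subst hLr
          simp [Nat.div_self hg, Nat.mod_self, List.replicate_one]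
      · have h1 : r.length ≤ L := le_of_not_ge h
        rw [List.take_of_length_le (le_of_not_ge h), ih (L - r.length) (by
          have := hL; rw [Nat.succ_mul] at this; omega)]
        rw [Nat.div_eq_sub_div hg h1, Nat.mod_eq_sub_mod h1]
        rw [join_rep_succ, List.append_assoc]

lemma pow_of_drop_prefix (g : ℕ) (hg : 0 < g) :
    ∀ (t : ℕ) (u : List A), u.length = t * g → u.drop g <+: u →
      u = (List.replicate t (u.take g)).flatten := by
  intro t
  induction t with
  | zero => intro u hlen _; simp at hlen; simp [hlen]
  | succ t ih =>
      intro u hlen hpre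
      have hlg : g ≤ u.length := by rw [hlen]; nlinarith [Nat.succ_mul t g]
      have hu' : u.drop g = (List.replicate t ((u.drop g).take g)).flatten := by
        apply ih
        · rw [List.length_drop, hlen]; rw [Nat.succ_mul]; omega
        · exact (hpre.drop g)
      rcases Nat.eq_zero_or_pos t with ht | ht
      · subst ht
        have hlen' : u.length ≤ g := by simp at hlen; omega
        rw [List.take_of_length_le hlen']
        simp
      · have hld : (u.drop g).length = t * g := by
          rw [List.length_drop, hlen, Nat.succ_mul]; omega
        have hgle : g ≤ (u.drop g).length := by rw [hld]; nlinarith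
        have hlen1 : ((u.drop g).take g).length = g := by
          rw [List.length_take]; omega
        have hlen2 : (u.take g).length = g := by
          rw [List.length_take]; omega
        have htake : (u.drop g).take g = u.take g := by
          have h1 : (u.drop g).take g <+: u.take g := by
            apply List.prefix_of_prefix_length_le
            · exact (List.take_prefix g _).trans hpre
            · exact List.take_prefix g u
            · omega
          apply h1.eq_of_length
          omega
        conv_lhs => rw [← List.take_append_drop g u]
        rw [hu', htake, List.replicate_succ]
        simp

lemma lps_eq_find? [DecidableEq A] (w : List A) :
    w.tails.find? (fun u => decide (u.reverse = u)) = some (lps w) := by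
  rcases h : w.tails.find? (fun u => decide (u.reverse = u)) with _ | q
  · exfalso
    have := List.find?_eq_none.mp h [] ((List.mem_tails _ _).mpr List.nil_suffix)
    simp at this
  · simp [lps, h]

lemma lps_suffix [DecidableEq A] (w : List A) : lps w <:+ w :=
  (List.mem_tails _ _).mp (List.mem_of_find?_eq_some (lps_eq_find? w))

lemma lps_pal [DecidableEq A] (w : List A) : (lps w).reverse = lps w := by
  have := List.find?_some (lps_eq_find? w)
  simpa using this

lemma lps_max [DecidableEq A] : ∀ (w q : List A), q <:+ w → q.reverse = q →
    q.length ≤ (lps w).length := by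
  intro w
  induction w with
  | nil => intro q hq _; rw [List.suffix_nil.mp hq]; simp
  | cons a w ih =>
      intro q hq hqpal
      by_cases hp : (a :: w).reverse = (a :: w)
      · have hfind : List.find? (fun u => decide (u.reverse = u)) ((a :: w) :: w.tails)
            = some (a :: w) := List.find?_cons_of_pos (decide_eq_true hp)
        have : lps (a :: w) = a :: w := by
          rw [lps, List.tails_cons, hfind]; rfl
        rw [this]
        exact hq.length_le
      · have hstep : lps (a :: w) = lps w := by
          simp only [lps, List.tails_cons]
          rw [List.find?_cons_of_neg (by simpa using hp)]
        rcases List.suffix_cons_iff.mp hq with h | h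
        · exact absurd (h ▸ hqpal) hp
        · rw [hstep]; exact ih q h hqpal

lemma tails_eq_map (w : List A) :
    w.tails = (List.range (w.length+1)).map (fun i => w.drop i) := by
  induction w with
  | nil => simp
  | cons a w ih =>
      have hr : (List.range ((a :: w).length + 1)).map (fun i => drop i (a :: w))
          = (a :: w) :: (List.range (w.length + 1)).map (fun i => drop i w) := by
        rw [show (a :: w).length + 1 = (w.length + 1) + 1 from rfl, List.range_succ_eq_map,
          List.map_cons, List.map_map]
        rfl
      rw [List.tails_cons, ih, hr]

lemma occCount_eq [DecidableEq A] (x w : List A) :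
    occCount x w = (List.range (w.length+1)).countP (fun i => decide (x <+: w.drop i)) := by
  rw [occCount, tails_eq_map, List.countP_map]
  rfl

lemma countP_range_eq_one {P : ℕ → Bool} {N j : ℕ} (hj : j < N) (hPj : P j = true)
    (huniq : ∀ i, i < N → P i = true → i = j) : (List.range N).countP P = 1 := by
  rw [List.countP_eq_length_filter]
  have hmem : j ∈ (List.range N).filter P := by
    rw [List.mem_filter, List.mem_range]; exact ⟨hj, hPj⟩
  have hall : ∀ x ∈ (List.range N).filter P, x = j := by
    intro x hx
    rw [List.mem_filter, List.mem_range] at hx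
    exact huniq x hx.1 hx.2
  have hnd : ((List.range N).filter P).Nodup := (List.nodup_range (n := N)).filter P
  rcases hfl : (List.range N).filter P with _ | ⟨b, l⟩
  · rw [hfl] at hmem; simp at hmem
  · rw [hfl] at hall hnd
    rcases l with _ | ⟨c, l'⟩
    · simp
    · exfalso
      have hb := hall b (by simp)
      have hc := hall c (by simp)
      simp [hb, hc] at hnd

lemma two_le_countP_range {P : ℕ → Bool} {N i j : ℕ} (hi : i < N) (hj : j < N)
    (hij : i ≠ j) (hPi : P i = true) (hPj : P j = true) :
    2 ≤ (List.range N).countP P := by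
  rw [List.countP_eq_length_filter]
  have h1 : ({i, j} : Finset ℕ) ⊆ ((List.range N).filter P).toFinset := by
    intro x hx
    simp at hx
    rcases hx with rfl | rfl <;>
      simp [List.mem_filter, List.mem_range, hi, hj, hPi, hPj]
  calc 2 = ({i, j} : Finset ℕ).card := (Finset.card_pair hij).symm
    _ ≤ ((List.range N).filter P).toFinset.card := Finset.card_le_card h1
    _ ≤ _ := List.toFinset_card_le _

lemma occCount_ge_two [DecidableEq A] {x w : List A} {i j : ℕ} (hij : i ≠ j)
    (hi : i ≤ w.length) (hj : j ≤ w.length)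
    (hxi : x <+: w.drop i) (hxj : x <+: w.drop j) : 2 ≤ occCount x w := by
  rw [occCount_eq]
  exact two_le_countP_range (N := w.length + 1) (i := i) (j := j) (by omega) (by omega) hij
    (by simpa using hxi) (by simpa using hxj)

lemma occCount_eq_one_of [DecidableEq A] {x w : List A} {j : ℕ} (hj : j ≤ w.length)
    (hx : x <+: w.drop j) (huniq : ∀ i, i ≤ w.length → x <+: w.drop i → i = j) :
    occCount x w = 1 := by
  rw [occCount_eq]
  apply countP_range_eq_one (N := w.length + 1) (j := j) (by omega) (by simpa using hx)
  intro i hi hPi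
  exact huniq i (by omega) (by simpa using hPi)

lemma mem_Factors {x w : List A} : x ∈ Factors w ↔ x <:+: w := by
  rw [Factors, List.mem_flatMap]
  constructor
  · rintro ⟨t, ht, hx⟩
    rw [List.mem_tails] at ht
    rw [List.mem_inits] at hx
    exact List.infix_iff_prefix_suffix.mpr ⟨t, hx, ht⟩
  · intro h
    rcases List.infix_iff_prefix_suffix.mp h with ⟨t, hx, ht⟩
    exact ⟨t, (List.mem_tails _ _).mpr ht, (List.mem_inits _ _).mpr hx⟩

lemma mem_palFactors [DecidableEq A] {x w : List A} :
    x ∈ palFactors w ↔ x <:+: w ∧ x.reverse = x := by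
  rw [palFactors, List.mem_toFinset, List.mem_filter, mem_Factors]
  simp

lemma getElem_congr' (u : List A) {x y : ℕ} (h : x = y) (hx : x < u.length)
    (hy : y < u.length) : u[x]'hx = u[y]'hy := by subst h; rfl

lemma period_gcd (u : List A) (p : ℕ) (hp : 0 < p) (hpn : p < u.length)
    (per1 : ∀ i (h : i + p < u.length), u[i]'(by omega) = u[i+p]'h)
    (per2 : ∀ i (h : i + (u.length - p) < u.length),
      u[i]'(by omega) = u[i + (u.length - p)]'h) :
    ∀ i (h : i + Nat.gcd p u.length < u.length),
      u[i]'(by omega) = u[i + Nat.gcd p u.length]'h := by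
  set n := u.length with hn
  haveI : NeZero n := ⟨by omega⟩
  set F : ZMod n → A := fun j => u[j.val]'(ZMod.val_lt j) with hF
  have step : ∀ j : ZMod n, F (j + (p : ZMod n)) = F j := by
    intro j
    have hjlt : j.val < n := ZMod.val_lt j
    have hval : (j + (p : ZMod n)).val = (j.val + p) % n := by
      rw [ZMod.val_add, ZMod.val_natCast]
      conv_rhs => rw [Nat.add_mod, Nat.mod_eq_of_lt hjlt]
    rcases Nat.lt_or_ge (j.val + p) n with hlt | hge
    · have hv2 : (j + (p : ZMod n)).val = j.val + p := by rw [hval, Nat.mod_eq_of_lt hlt]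
      simp only [hF]
      simp only [hv2]
      exact (per1 j.val hlt).symm
    · have hv2 : (j + (p : ZMod n)).val = j.val + p - n := by
        rw [hval, Nat.mod_eq_sub_mod hge, Nat.mod_eq_of_lt (by omega)]
      simp only [hF]
      simp only [hv2]
      have h2 : (j.val + p - n) + (n - p) < n := by omega
      have h3 := per2 (j.val + p - n) h2
      calc u[j.val + p - n]'(by omega)
          = u[(j.val + p - n) + (n - p)]'h2 := h3
        _ = u[j.val]'hjlt := getElem_congr' u (by omega) _ _
  have stepc : ∀ (c : ℕ) (j : ZMod n), F (j + ((c * p : ℕ) : ZMod n)) = F j := by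
    intro c
    induction c with
    | zero => intro j; simp
    | succ c ih =>
        intro j
        have e : (((c+1) * p : ℕ) : ZMod n) = ((c*p : ℕ) : ZMod n) + (p : ZMod n) := by
          push_cast; ring
        rw [e, ← add_assoc, step, ih]
  set g := Nat.gcd p n with hg
  set a : ℕ := (((Nat.gcdA p n : ℤ) : ZMod n)).val with ha
  have hcast : ((g : ℕ) : ZMod n) = ((a * p : ℕ) : ZMod n) := by
    have hb2 := congrArg (fun z : ℤ => (z : ZMod n)) (Nat.gcd_eq_gcd_ab p n)
    simp only [Int.cast_add, Int.cast_mul, Int.cast_natCast, ZMod.natCast_self,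
      zero_mul, add_zero] at hb2
    have h2 : (((Nat.gcdA p n : ℤ) : ZMod n)) = ((a : ℕ) : ZMod n) := by
      rw [ha, ZMod.natCast_val, ZMod.cast_id]
    rw [hg, hb2, h2]
    push_cast
    ring
  intro i h
  have h1 := stepc a ((i : ℕ) : ZMod n)
  rw [← hcast] at h1
  have e1 : ((i : ℕ) : ZMod n) + ((g : ℕ) : ZMod n) = ((i + g : ℕ) : ZMod n) := by
    push_cast; ring
  rw [e1] at h1
  simp only [hF] at h1
  have v1 : (((i + g : ℕ)) : ZMod n).val = i + g := ZMod.val_natCast_of_lt (by omega)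
  have v2 : (((i : ℕ)) : ZMod n).val = i := ZMod.val_natCast_of_lt (by omega)
  calc u[i]'(by omega)
      = u[(((i : ℕ)) : ZMod n).val]'(ZMod.val_lt _) := getElem_congr' u v2.symm _ _
    _ = u[(((i + g : ℕ)) : ZMod n).val]'(ZMod.val_lt _) := h1.symm
    _ = u[i + g]'h := getElem_congr' u v1 _ _

lemma infix_of_split {x w s t : List A} {a : A} (h : s ++ x ++ t = w ++ [a])
    (ht : t ≠ []) : x <:+: w := by
  rcases List.eq_nil_or_concat t with rfl | ⟨t', b, rfl⟩
  · exact absurd rfl ht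
  · have h3 : (s ++ x ++ t') ++ [b] = w ++ [a] := by
      rw [← h]; simp [List.concat_eq_append]
  
    have h4 := (List.append_inj' h3 rfl).1
    exact ⟨s, t', h4⟩

lemma infix_concat_cases {x w : List A} {a : A} (h : x <:+: w ++ [a]) :
    x <:+: w ∨ x <:+ w ++ [a] := by
  rcases h with ⟨s, t, hst⟩
  rcases List.eq_nil_or_concat t with rfl | ⟨t', b, rfl⟩
  · right; exact ⟨s, by simpa using hst⟩
  · left; exact infix_of_split hst (by simp)

lemma palFactors_concat [DecidableEq A] (w : List A) (a : A) :
    palFactors (w ++ [a]) = insert (lps (w ++ [a])) (palFactors w) := by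
  apply Finset.ext; intro x
  simp only [Finset.mem_insert, mem_palFactors]
  constructor
  · rintro ⟨hinf, hpal⟩
    rcases infix_concat_cases hinf with h | h
    · right; exact ⟨h, hpal⟩
    · have hle := lps_max (w ++ [a]) x h hpal
      rcases lt_or_eq_of_le hle with hlt | heq
      · right
        refine ⟨?_, hpal⟩
        have hxL : x <:+ lps (w ++ [a]) :=
          List.suffix_of_suffix_length_le h (lps_suffix _) (le_of_lt hlt)
        have hxLp : x <+: lps (w ++ [a]) := by
          have h5 := List.reverse_prefix.mpr hxL
          rwa [hpal, lps_pal] at h5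
        obtain ⟨t, ht⟩ := hxLp
        have hsp : (w ++ [a]).take ((w ++ [a]).length - (lps (w ++ [a])).length)
            ++ x ++ t = w ++ [a] := by
          rw [List.append_assoc, ht]
          conv_rhs => rw [← List.take_append_drop ((w ++ [a]).length - (lps (w ++ [a])).length) (w ++ [a])]
          congr 1
          exact List.suffix_iff_eq_drop.mp (lps_suffix (w ++ [a]))
        apply infix_of_split hsp
        intro htnil
        rw [htnil] at ht
        simp at ht
        rw [ht] at hlt
        omega
      · left
        exact ((List.suffix_of_suffix_length_le (lps_suffix _) h (le_of_eq heq.symm)).eq_of_length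
          heq.symm).symm
  · rintro (rfl | ⟨hinf, hpal⟩)
    · exact ⟨(lps_suffix _).isInfix, lps_pal _⟩
    · exact ⟨hinf.trans (List.prefix_append w [a]).isInfix, hpal⟩

lemma card_palFactors_concat [DecidableEq A] {w : List A} {a : A}
    (h : occCount (lps (w ++ [a])) (w ++ [a]) = 1) :
    (palFactors (w ++ [a])).card = (palFactors w).card + 1 := by
  rw [palFactors_concat, Finset.card_insert_of_notMem, Nat.add_comm]
  intro hmem
  rw [mem_palFactors] at hmem
  obtain ⟨⟨s, t, hst⟩, _⟩ := hmem
  set L := lps (w ++ [a]) with hL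
  have hsplit : w ++ [a] = s ++ (L ++ (t ++ [a])) := by
    rw [← List.append_assoc, ← List.append_assoc, hst]
  have hocc1 : L <+: (w ++ [a]).drop s.length := by
    rw [hsplit, List.drop_left]
    exact List.prefix_append _ _
  have hocc2 : L <+: (w ++ [a]).drop ((w ++ [a]).length - L.length) := by
    rw [← List.suffix_iff_eq_drop.mp (lps_suffix _)]
  have hlen : s.length + L.length + t.length = w.length := by
    have := congrArg List.length hst
    simp at this
    omega
  have hLle : L.length ≤ (w ++ [a]).length := (lps_suffix _).length_le
  have h2 : 2 ≤ occCount L (w ++ [a]) := by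
    apply occCount_ge_two (i := s.length) (j := (w ++ [a]).length - L.length)
      (by simp at hLle ⊢; omega) (by simp at hLle ⊢; omega) (by omega) hocc1 hocc2
  omega


lemma rev_join_rep (r : List A) (t : ℕ) :
    ((List.replicate t r).flatten).reverse = (List.replicate t r.reverse).flatten := by
  induction t with
  | zero => simp
  | succ t ih =>
      rw [join_rep_succ, List.reverse_append, ih, join_rep_succ' r.reverse t]

lemma P_pal (u v : List A) (hupal : u.reverse = u) (j : ℕ) :
    (v.reverse ++ (List.replicate j u).flatten ++ v).reverse
      = v.reverse ++ (List.replicate j u).flatten ++ v := by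
  simp [List.reverse_append, join_rep_rev u hupal, List.append_assoc]

lemma P_suffix (u v : List A) (hupal : u.reverse = u) (hvu : v <+: u) (k : ℕ)
    (hk : 1 ≤ k) :
    v.reverse ++ (List.replicate (k - 1) u).flatten ++ v <:+
      (List.replicate k u).flatten ++ v := by
  obtain ⟨t, ht⟩ := hvu
  have hu : u = t.reverse ++ v.reverse := by
    rw [← hupal, ← ht]; simp
  refine ⟨t.reverse, ?_⟩
  calc t.reverse ++ (v.reverse ++ (List.replicate (k-1) u).flatten ++ v)
      = (t.reverse ++ v.reverse) ++ ((List.replicate (k-1) u).flatten ++ v) := by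
        simp [List.append_assoc]
    _ = u ++ ((List.replicate (k-1) u).flatten ++ v) := by rw [← hu]
    _ = (List.replicate k u).flatten ++ v := by
        conv_rhs => rw [show k = (k-1)+1 by omega, join_rep_succ]
        simp [List.append_assoc]

lemma key_unioccurrent [DecidableEq A] :
    ∀ N : ℕ, ∀ u v : List A, u.length ≤ N → u ≠ [] → u.reverse = u → v ≠ [] → v <+: u →
      ∀ k, 2 ≤ k →
      occCount (lps ((List.replicate k u).flatten ++ v)) ((List.replicate k u).flatten ++ v) = 1 := by
  intro N
  induction N with
  | zero =>
      intro u v hN hu _ _ _ _ _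
      exact absurd (List.length_eq_zero_iff.mp (Nat.le_zero.mp hN)) hu
  | succ N IH =>
    intro u v hN hu hupal hv hvu k hk
    have hn1 : 1 ≤ u.length := List.length_pos_iff.mpr hu
    have hm1 : 1 ≤ v.length := List.length_pos_iff.mpr hv
    have hmn : v.length ≤ u.length := hvu.length_le
    set n := u.length with hn
    set m := v.length with hm
    set w := (List.replicate k u).flatten ++ v with hw
    have hwlen : w.length = k * n + m := by
      rw [hw]; simp [length_join_rep]; rfl
    have hkn : k * n = (k-1) * n + n := by
      conv_lhs => rw [show k = (k-1)+1 by omega]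
      ring
    have hkn2 : n ≤ (k-1) * n := Nat.le_mul_of_pos_left n (by omega)
    have hsplit : w = u ++ ((List.replicate (k-1) u).flatten ++ v) := by
      rw [hw]
      conv_lhs => rw [show k = (k-1)+1 by omega, join_rep_succ]
      rw [List.append_assoc]
    have hdropn : w.drop n = (List.replicate (k-1) u).flatten ++ v := by
      rw [hsplit]; exact List.drop_left
    have hupre2 : u <+: w.drop n := by
      rw [hdropn]
      conv_rhs => rw [show k - 1 = (k-2)+1 by omega, join_rep_succ]
      rw [List.append_assoc]
      exact List.prefix_append u _
    have hupre0 : u <+: w := ⟨_, hsplit.symm⟩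
    by_cases hocc : ∃ p, 0 < p ∧ p < n ∧ u <+: w.drop p
    · -- reduction to a smaller period
      obtain ⟨p, hp0, hpn, hup⟩ := hocc
      have hoccp : ∀ x (h : x < n), u[x]'h = w[p+x]'(by
          rw [hwlen]; omega) := by
        intro x hx
        have e2 := hup.getElem (i := x) hx
        rwa [List.getElem_drop] at e2
      have per1 : ∀ i (h : i + p < u.length), u[i]'(by omega) = u[i+p]'h := by
        intro i h
        have e1 := hupre0.getElem (i := i+p) h
        have e2 := hoccp i (by omega)
        rw [e2, e1]
        apply getElem_congr'
        omega
      have per2 : ∀ i (h : i + (u.length - p) < u.length),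
          u[i]'(by omega) = u[i + (u.length - p)]'h := by
        intro i h
        have e2 := hoccp (i + (u.length - p)) h
        have e3 := hupre2.getElem (i := i) (by omega)
        rw [List.getElem_drop] at e3
        rw [e2, e3]
        apply getElem_congr'
        omega
      have perg := period_gcd u p hp0 hpn per1 per2
      set g := Nat.gcd p u.length with hg
      have hg0 : 0 < g := Nat.gcd_pos_of_pos_left _ hp0
      have hgn : g ∣ n := Nat.gcd_dvd_right p n
      have hgltn : g < n := lt_of_le_of_lt (Nat.gcd_le_left _ hp0) hpn
      have h2g : 2 * g ≤ n := by
        obtain ⟨c, hc⟩ := hgn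
        have hc2 : 2 ≤ c := by
          by_contra hcc
          have : g * c ≤ g * 1 := Nat.mul_le_mul_left g (by omega)
          omega
        have : g * 2 ≤ g * c := Nat.mul_le_mul_left g hc2
        omega
      have hdg : u.drop g <+: u := by
        have hdt : u.drop g = u.take (n - g) := by
          apply List.ext_getElem
          · simp; omega
          · intro i h1 h2
            rw [List.getElem_drop, List.getElem_take]
            have h3 : i + g < u.length := by simp at h1; omega
            have := perg i h3
            rw [this]
            apply getElem_congr'
            omega
        rw [hdt]; exact List.take_prefix _ _
      set t := n / g with htdef
      have hnt : n = t * g := (Nat.div_mul_cancel hgn).symm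
      have ht1 : 1 ≤ t := by
        rcases Nat.eq_zero_or_pos t with h0 | h1
        · rw [h0, Nat.zero_mul] at hnt; omega
        · exact h1
      set r := u.take g with hr
      have hrlen : r.length = g := by
        rw [hr, List.length_take]; omega
      have hrne : r ≠ [] := by
        intro hcon; rw [hcon] at hrlen; simp at hrlen; omega
      have hur : u = (List.replicate t r).flatten :=
        pow_of_drop_prefix g hg0 t u (by omega) hdg
      have hrpal : r.reverse = r := by
        have h3 : (List.replicate t r.reverse).flatten = (List.replicate t r).flatten := by
          rw [← rev_join_rep, ← hur, hupal, hur]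
        have h4 := congrArg (List.take g) h3
        rw [show t = (t-1)+1 by omega, join_rep_succ, join_rep_succ,
          List.take_left' (by simp [hrlen]), List.take_left' hrlen] at h4
        exact h4
      -- w is a prefix of r^((k+1)*t)
      have hwpre : w <+: (List.replicate ((k+1)*t) r).flatten := by
        have h5 : (List.replicate (k+1) u).flatten = (List.replicate ((k+1)*t) r).flatten := by
          conv_lhs => rw [hur]
          exact join_rep_join r (k+1) t
        rw [← h5, join_rep_succ']
        obtain ⟨s, hs⟩ := hvu
        exact ⟨s, by rw [hw, List.append_assoc, hs]⟩
      have hLle : w.length ≤ (k+1)*t * r.length := by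
        rw [hrlen, Nat.mul_assoc, ← hnt, hwlen]
        nlinarith
      have hwtake : w = (List.replicate (w.length / g) r).flatten ++ r.take (w.length % g) := by
        obtain ⟨s, hs⟩ := hwpre
        have h6 : w = ((List.replicate ((k+1)*t) r).flatten).take w.length := by
          rw [← hs, List.take_left' rfl]
        have h7 := take_join_rep r (by rw [hrlen]; exact hg0) ((k+1)*t) w.length hLle
        rw [hrlen] at h7
        conv_lhs => rw [h6, h7]
      have hQ4 : 4 ≤ w.length / g := by
        rw [Nat.le_div_iff_mul_le hg0]
        have h2n : 2*n ≤ k*n := Nat.mul_le_mul_right n hk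
        rw [hwlen]
        omega
      have hgN : g ≤ N := by omega
      rcases Nat.eq_zero_or_pos (w.length % g) with hmod | hmod
      · have hw2 : w = (List.replicate (w.length/g - 1) r).flatten ++ r := by
          calc w = (List.replicate (w.length/g) r).flatten := by
                conv_lhs => rw [hwtake]
                rw [hmod]; simp
            _ = (List.replicate (w.length/g - 1) r).flatten ++ r := by
                conv_lhs => rw [show w.length/g = (w.length/g - 1)+1 by omega, join_rep_succ']
        have hres := IH r r (le_of_eq_of_le hrlen hgN) hrne hrpal hrne List.prefix_rfl (w.length/g - 1) (by omega)
        rw [← hw2] at hres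
        exact hres
      · have hmodlt : w.length % g < g := Nat.mod_lt _ hg0
        have hvne : r.take (w.length % g) ≠ [] := by
          apply List.ne_nil_of_length_pos
          rw [List.length_take]
          omega
        have hres := IH r (r.take (w.length % g)) (le_of_eq_of_le hrlen hgN) hrne hrpal hvne
          (List.take_prefix _ _) (w.length/g) (by omega)
        rw [← hwtake] at hres
        exact hres
    · -- unique occurrence, directly
      set q := lps w with hq
      have hqs : q <:+ w := lps_suffix w
      have hqpal : q.reverse = q := lps_pal w
      have hPlen : (k-1)*n + 2*m ≤ q.length := by
        have h7 := lps_max w _ (P_suffix u v hupal hvu k (by omega)) (P_pal u v hupal (k-1))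
        rw [← hq] at h7
        simp only [List.length_append, List.length_reverse, length_join_rep] at h7
        rw [← hn, ← hm] at h7
        omega
      have hqlen_le : q.length ≤ w.length := hqs.length_le
      obtain ⟨j0, hj0def⟩ : ∃ j0, j0 = w.length - q.length := ⟨_, rfl⟩
      have hqd : q = w.drop j0 := by rw [hj0def]; exact List.suffix_iff_eq_drop.mp hqs
      apply occCount_eq_one_of (j := j0) (by omega)
        (by rw [← hqd])
      intro i hi hpre
      by_contra hne
      have hilt : i < j0 := by
        have h8 := hpre.length_le
        rw [List.length_drop] at h8
        omega
      have hj0 : j0 ≤ n - m := by omega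
      have hqdrop : q.drop (n - j0) = w.drop n := by
        rw [hqd, List.drop_drop]
        congr 1
        omega
      have h1 : q.drop (n - j0) <+: (w.drop i).drop (n - j0) := hpre.drop _
      rw [hqdrop, List.drop_drop] at h1
      have hupd : u <+: w.drop (i + (n - j0)) := hupre2.trans h1
      exact hocc ⟨i + (n - j0), by omega, by omega, hupd⟩

theorem power_suffix_palindrome_and_defect [DecidableEq A] (u v : List A)
    (hu : u ≠ []) (hupal : u.reverse = u) (hv : v ≠ []) (hvu : v <+: u)
    (k : ℕ) (hk : 2 ≤ k) :
    (v.reverse ++ (List.replicate (k - 1) u).flatten ++ v <:+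
        (List.replicate k u).flatten ++ v) ∧
    ((v.reverse ++ (List.replicate (k - 1) u).flatten ++ v).reverse =
        v.reverse ++ (List.replicate (k - 1) u).flatten ++ v) ∧
    (occCount (v.reverse ++ (List.replicate (k - 1) u).flatten ++ v)
        ((List.replicate k u).flatten ++ v) = 1 →
      lps ((List.replicate k u).flatten ++ v) =
        v.reverse ++ (List.replicate (k - 1) u).flatten ++ v) ∧
    (occCount (lps ((List.replicate k u).flatten ++ v))
        ((List.replicate k u).flatten ++ v) = 1) ∧
    defect (List.replicate (k + 1) u).flatten = defect (List.replicate k u).flatten := by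
  have hn1 : 1 ≤ u.length := List.length_pos_iff.mpr hu
  set w := (List.replicate k u).flatten ++ v with hw
  set P := v.reverse ++ (List.replicate (k - 1) u).flatten ++ v with hP
  have hPs : P <:+ w := P_suffix u v hupal hvu k (by omega)
  have hPp : P.reverse = P := P_pal u v hupal (k-1)
  refine ⟨hPs, hPp, ?_, ?_, ?_⟩
  · -- conditional lps = P
    intro hone
    have hle := lps_max w P hPs hPp
    have hlps_s := lps_suffix w
    have hlps_pal := lps_pal w
    have hlpslen : (lps w).length ≤ w.length := hlps_s.length_le
    rcases Nat.lt_or_ge P.length (lps w).length with hlt | hge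
    · exfalso
      have h1 : P <:+ lps w := List.suffix_of_suffix_length_le hPs hlps_s (le_of_lt hlt)
      have h2 : P <+: lps w := by
        have h3 := List.reverse_prefix.mpr h1
        rwa [hPp, lps_pal] at h3
      have hocc1 : P <+: w.drop (w.length - (lps w).length) := by
        rw [← List.suffix_iff_eq_drop.mp hlps_s]
        exact h2
      have hocc2 : P <+: w.drop (w.length - P.length) := by
        rw [← List.suffix_iff_eq_drop.mp hPs]
      have h4 : 2 ≤ occCount P w :=
        occCount_ge_two (i := w.length - (lps w).length) (j := w.length - P.length)
          (by omega) (by omega) (by omega) hocc1 hocc2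
      omega
    · exact (List.suffix_of_suffix_length_le hlps_s hPs hge).eq_of_length
        (Nat.le_antisymm hge hle)
  · exact key_unioccurrent u.length u v le_rfl hu hupal hv hvu k hk
  · -- defect equality
    have hcard : ∀ j, j ≤ u.length →
        (palFactors ((List.replicate k u).flatten ++ u.take j)).card
          = (palFactors ((List.replicate k u).flatten)).card + j := by
      intro j
      induction j with
      | zero => intro _; simp
      | succ j ihj =>
          intro hj
          have hju : j < u.length := by omega
          have hstep : (List.replicate k u).flatten ++ u.take (j+1)
              = ((List.replicate k u).flatten ++ u.take j) ++ [u[j]] := by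
            rw [List.append_assoc]
            congr 1
            rw [List.take_succ, List.getElem?_eq_getElem hju]
            rfl
          have hocc1 := key_unioccurrent u.length u (u.take (j+1)) le_rfl hu hupal
            (by apply List.ne_nil_of_length_pos; rw [List.length_take]; omega)
            (List.take_prefix _ _) k hk
          rw [hstep] at hocc1
          rw [hstep, card_palFactors_concat hocc1, ihj (by omega)]
          omega
      
    have h1 := hcard u.length le_rfl
    rw [List.take_length, ← join_rep_succ'] at h1
    rw [defect, defect, h1, length_join_rep, length_join_rep]
    have : (k+1) * u.length = k * u.length + u.length := by ring
    omega
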